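/- Let C be an n×n real symmetric positive-semidefinite matrix and let 0 < s < n be an integer with s > rank(C). Then the scaled linx bound tends to −∞ as the scaling parameter tends to +∞: lim_{γ→+∞} linx(C,s;γ) = −∞. In particular, no optimal scaling parameter exists. -/

import Mathlib

open Matrix Real Set Filter

noncomputable section

/-- The feasible polytope `P(n,s)`. -/
def PP (n s : ℕ) : Set (Fin n → ℝ) :=
  {x | (∑ i, x i) = (s : ℝ) ∧ ∀ i, 0 ≤ x i ∧ x i ≤ 1}

/-- The scaled linx objective `f(C,s;γ;x)`. -/
def fLinxScaled {n : ℕ} (C : Matrix (Fin n) (Fin n) ℝ) (s : ℕ) (γ : ℝ) (x : Fin n → ℝ) : ℝ :=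
  (1 / 2) * (Real.log ((γ • (C * Matrix.diagonal x * C) + Matrix.diagonal fun i => 1 - x i).det)
    - (s : ℝ) * Real.log γ)

/-- The scaled linx bound `linx(C,s;γ)`. -/
def linxScaled (n s : ℕ) (C : Matrix (Fin n) (Fin n) ℝ) (γ : ℝ) : ℝ :=
  sSup (fLinxScaled C s γ '' PP n s)

variable {n : ℕ}

lemma smul_posSemidef {A : Matrix (Fin n) (Fin n) ℝ} (hA : A.PosSemidef) {γ : ℝ} (hγ : 0 ≤ γ) :
    (γ • A).PosSemidef := by
  constructor
  · unfold Matrix.IsHermitian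
    rw [conjTranspose_smul, hA.1]
    simp
  · intro x
    exact (hA.smul hγ).2 x

lemma det_one_add_smul_eq {A : Matrix (Fin n) (Fin n) ℝ} (hA : A.IsHermitian) (γ : ℝ) :
    (1 + γ • A).det = ∏ i, (1 + γ * hA.eigenvalues i) := by
  have key : 1 + γ • A =
      (hA.eigenvectorUnitary : Matrix (Fin n) (Fin n) ℝ) *
        diagonal (fun i => 1 + γ * hA.eigenvalues i) *
        (star (hA.eigenvectorUnitary : Matrix (Fin n) (Fin n) ℝ)) := by
    have hd : diagonal (fun i => 1 + γ * hA.eigenvalues i) =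
        1 + γ • Matrix.diagonal (RCLike.ofReal ∘ hA.eigenvalues) := by
      rw [← diagonal_one, ← diagonal_smul, ← diagonal_add]
      congr 1 with i
    rw [hd, Matrix.mul_add, Matrix.add_mul, Matrix.mul_one,
      (Matrix.mem_unitaryGroup_iff).mp (hA.eigenvectorUnitary).2,
      Matrix.mul_smul, Matrix.smul_mul,
      ← Unitary.conjStarAlgAut_apply (S := ℝ), ← hA.spectral_theorem]
  rw [key, det_mul_right_comm, (Matrix.mem_unitaryGroup_iff).mp (hA.eigenvectorUnitary).2,
    Matrix.one_mul, det_diagonal]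

lemma trace_eq_sum_eigenvalues {A : Matrix (Fin n) (Fin n) ℝ} (hA : A.IsHermitian) :
    A.trace = ∑ i, hA.eigenvalues i := by
  conv_lhs => rw [hA.spectral_theorem, Unitary.conjStarAlgAut_apply]
  rw [trace_mul_cycle, Unitary.coe_star_mul_self, Matrix.one_mul, trace_diagonal]
  simp

lemma psd_det_nonneg {A : Matrix (Fin n) (Fin n) ℝ} (hA : A.PosSemidef) : 0 ≤ A.det := by
  rw [hA.1.det_eq_prod_eigenvalues]
  exact Finset.prod_nonneg fun i _ => hA.eigenvalues_nonneg i

lemma det_le_det_add {M P : Matrix (Fin n) (Fin n) ℝ} (hM : M.PosSemidef) (hP : P.PosSemidef) :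
    M.det ≤ (M + P).det := by
  rcases eq_or_lt_of_le (psd_det_nonneg hM) with h0 | hpos
  · rw [← h0]; exact psd_det_nonneg (hM.add hP)
  · set S := (open MatrixOrder in CFC.sqrt M) with hSdef
    have hSS : S * S = M := by
      open MatrixOrder in exact CFC.sqrt_mul_sqrt_self M (nonneg_iff_posSemidef.mpr hM)
    have hSh : S.IsHermitian := by
      open MatrixOrder in exact (nonneg_iff_posSemidef.mp (CFC.sqrt_nonneg M)).1
    have hdetS : S.det * S.det = M.det := by rw [← det_mul, hSS]
    have hdS : IsUnit S.det := by
      refine isUnit_iff_ne_zero.mpr fun h => ?_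
      rw [h, mul_zero] at hdetS; exact hpos.ne hdetS
    have h1 : S * S⁻¹ = 1 := mul_nonsing_inv _ hdS
    have h2 : S⁻¹ * S = 1 := nonsing_inv_mul _ hdS
    set Q := S⁻¹ * P * S⁻¹ with hQdef
    have hinv : S⁻¹ᴴ = S⁻¹ := by rw [conjTranspose_nonsing_inv, hSh.eq]
    have hQ : Q.PosSemidef := by
      have h := hP.mul_mul_conjTranspose_same S⁻¹
      rwa [hinv] at h
    have key : M + P = S * (1 + Q) * S := by
      rw [Matrix.mul_add, Matrix.add_mul, Matrix.mul_one, hSS, hQdef]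
      congr 1
      have hassoc : S * (S⁻¹ * P * S⁻¹) * S = S * S⁻¹ * P * (S⁻¹ * S) := by
        simp only [Matrix.mul_assoc]
      rw [hassoc, h1, h2, Matrix.one_mul, Matrix.mul_one]
    have hdet1Q : 1 ≤ (1 + Q).det := by
      have := det_one_add_smul_eq hQ.1 1
      rw [one_smul] at this
      rw [this]
      have h := Finset.prod_le_prod (s := Finset.univ) (f := fun _ : Fin n => (1:ℝ))
        (g := fun i => 1 + 1 * hQ.1.eigenvalues i) (fun i _ => zero_le_one)
        (fun i _ => by have := hQ.eigenvalues_nonneg i; simp; linarith)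
      simpa using h
    calc M.det = M.det * 1 := (mul_one _).symm
      _ ≤ M.det * (1 + Q).det := by
          exact mul_le_mul_of_nonneg_left hdet1Q hpos.le
      _ = (M + P).det := by
          rw [key, det_mul, det_mul, ← hdetS]; ring


lemma PP_nonempty {n s : ℕ} (hsn : s ≤ n) : (PP n s).Nonempty := by
  refine ⟨fun i => if (i : ℕ) < s then 1 else 0, ?_, fun i => ?_⟩
  · rw [Fin.sum_univ_eq_sum_range (fun i => if i < s then (1:ℝ) else 0), ← Finset.sum_filter]
    have h : (Finset.range n).filter (· < s) = Finset.range s := by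
      ext a
      simp only [Finset.mem_filter, Finset.mem_range]
      omega
    rw [h]
    simp
  · dsimp only
    split <;> norm_num

lemma det_bound {n s : ℕ} (C : Matrix (Fin n) (Fin n) ℝ) (hC : C.PosSemidef)
    {x : Fin n → ℝ} (hx : x ∈ PP n s) {γ : ℝ} (hγ : 1 ≤ γ) :
    (γ • (C * Matrix.diagonal x * C) + Matrix.diagonal fun i => 1 - x i).det
      ≤ ((1 + (C * C).trace) * γ) ^ C.rank := by
  have hγ0 : (0:ℝ) ≤ γ := by linarith
  set A := C * Matrix.diagonal x * C with hAdef
  have hDx : (Matrix.diagonal x).PosSemidef :=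
    posSemidef_diagonal_iff.mpr fun i => (hx.2 i).1
  have hA : A.PosSemidef := by
    have h := hDx.mul_mul_conjTranspose_same C
    rwa [hC.1.eq] at h
  have hγA : (γ • A).PosSemidef := smul_posSemidef hA hγ0
  have hD1x : (Matrix.diagonal fun i => 1 - x i).PosSemidef :=
    posSemidef_diagonal_iff.mpr fun i => by have := (hx.2 i).2; linarith
  -- monotонicity step
  have hstep1 : (γ • A + Matrix.diagonal fun i => 1 - x i).det ≤ (1 + γ • A).det := by
    have h := det_le_det_add (hγA.add hD1x) hDx
    have heq : (γ • A + Matrix.diagonal fun i => 1 - x i) + Matrix.diagonal x = 1 + γ • A := by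
      rw [add_assoc, Matrix.diagonal_add, ← Matrix.diagonal_one, add_comm (γ • A)]
      congr 1 with i
      ring
    rwa [heq] at h
  -- eigenvalue bounds
  have hsym : ∀ i j, C j i = C i j := fun i j => by
    conv_lhs => rw [← hC.1.eq]
    simp [conjTranspose_apply]
  have hCCd : ∀ i, 0 ≤ (C * C) i i := fun i => by
    rw [Matrix.mul_apply]
    refine Finset.sum_nonneg fun k _ => ?_
    rw [hsym k i]
    exact mul_self_nonneg _
  have hT0 : 0 ≤ (C * C).trace := by
    unfold Matrix.trace
    exact Finset.sum_nonneg fun i _ => hCCd i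
  have htrA : A.trace ≤ (C * C).trace := by
    have h1 : A.trace = ((C * C) * Matrix.diagonal x).trace := by
      rw [hAdef, trace_mul_comm, ← Matrix.mul_assoc]
    rw [h1]
    unfold Matrix.trace
    refine Finset.sum_le_sum fun i _ => ?_
    have h2 : ((C * C) * Matrix.diagonal x).diag i = (C * C) i i * x i := by
      simp [Matrix.diag, Matrix.mul_diagonal]
    rw [h2]
    calc (C * C) i i * x i ≤ (C * C) i i * 1 :=
          mul_le_mul_of_nonneg_left (hx.2 i).2 (hCCd i)
      _ = (C * C).diag i := by simp [Matrix.diag]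
  have hev_le : ∀ i, hA.1.eigenvalues i ≤ (C * C).trace := fun i => by
    have hsum := trace_eq_sum_eigenvalues hA.1
    have hle : hA.1.eigenvalues i ≤ ∑ j, hA.1.eigenvalues j :=
      Finset.single_le_sum (fun j _ => hA.eigenvalues_nonneg j) (Finset.mem_univ i)
    linarith
  -- product bound
  set b := (1 + (C * C).trace) * γ with hbdef
  have hb1 : 1 ≤ b := by nlinarith
  have hfac : ∀ i, 1 + γ * hA.1.eigenvalues i ≤ b := fun i => by
    have h1 : γ * hA.1.eigenvalues i ≤ γ * (C * C).trace :=
      mul_le_mul_of_nonneg_left (hev_le i) hγ0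
    nlinarith
  set t := Finset.univ.filter (fun i => hA.1.eigenvalues i ≠ 0) with htdef
  have hcard : t.card ≤ C.rank := by
    have h1 : A.rank = Fintype.card {i // hA.1.eigenvalues i ≠ 0} :=
      hA.1.rank_eq_card_non_zero_eigs
    have h2 : Fintype.card {i // hA.1.eigenvalues i ≠ 0} = t.card := Fintype.card_subtype _
    have h3 : A.rank ≤ C.rank := Matrix.rank_mul_le_right (C * Matrix.diagonal x) C
    omega
  have hprod : ∏ i, (1 + γ * hA.1.eigenvalues i) ≤ b ^ C.rank := by
    have hsplit := Finset.prod_filter_mul_prod_filter_not Finset.univ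
      (fun i => hA.1.eigenvalues i ≠ 0) (fun i => 1 + γ * hA.1.eigenvalues i)
    have hone : ∏ i ∈ Finset.univ.filter (fun i => ¬ hA.1.eigenvalues i ≠ 0),
        (1 + γ * hA.1.eigenvalues i) = 1 := by
      refine Finset.prod_eq_one fun i hi => ?_
      rw [Finset.mem_filter] at hi
      have : hA.1.eigenvalues i = 0 := not_not.mp hi.2
      rw [this]; ring
    have h1 : ∏ i, (1 + γ * hA.1.eigenvalues i) = ∏ i ∈ t, (1 + γ * hA.1.eigenvalues i) := by
      rw [← hsplit, hone, mul_one]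
    have h2 : ∏ i ∈ t, (1 + γ * hA.1.eigenvalues i) ≤ ∏ _i ∈ t, b := by
      refine Finset.prod_le_prod (fun i _ => ?_) (fun i _ => hfac i)
      have := hA.eigenvalues_nonneg i
      nlinarith
    have h3 : ∏ _i ∈ t, b = b ^ t.card := Finset.prod_const b
    have h4 : b ^ t.card ≤ b ^ C.rank := pow_le_pow_right₀ hb1 hcard
    calc ∏ i, (1 + γ * hA.1.eigenvalues i) = ∏ i ∈ t, (1 + γ * hA.1.eigenvalues i) := h1
      _ ≤ b ^ t.card := by rw [← h3]; exact h2
      _ ≤ b ^ C.rank := h4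
  calc (γ • A + Matrix.diagonal fun i => 1 - x i).det ≤ (1 + γ • A).det := hstep1
    _ = ∏ i, (1 + γ * hA.1.eigenvalues i) := det_one_add_smul_eq hA.1 γ
    _ ≤ b ^ C.rank := hprod


lemma hTnn {n : ℕ} (C : Matrix (Fin n) (Fin n) ℝ) (hC : C.PosSemidef) : 0 ≤ (C * C).trace := by
  have hsym : ∀ i j, C j i = C i j := fun i j => by
    conv_lhs => rw [← hC.1.eq]
    simp [conjTranspose_apply]
  unfold Matrix.trace
  refine Finset.sum_nonneg fun i _ => ?_
  show 0 ≤ (C * C) i i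
  rw [Matrix.mul_apply]
  refine Finset.sum_nonneg fun k _ => ?_
  rw [hsym k i]
  exact mul_self_nonneg _

lemma fLinx_le {n s : ℕ} (C : Matrix (Fin n) (Fin n) ℝ) (hC : C.PosSemidef)
    {x : Fin n → ℝ} (hx : x ∈ PP n s) {γ : ℝ} (hγ : 1 ≤ γ) :
    fLinxScaled C s γ x ≤
      (1/2) * ((C.rank : ℝ) * Real.log ((1 + (C * C).trace) * γ) - s * Real.log γ) := by
  unfold fLinxScaled
  have hγ0 : (0:ℝ) ≤ γ := by linarith
  set b := (1 + (C * C).trace) * γ with hbdef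
  have hb1 : 1 ≤ b := by nlinarith [hTnn C hC]
  have hdet0 : 0 ≤ (γ • (C * Matrix.diagonal x * C) + Matrix.diagonal fun i => 1 - x i).det := by
    refine psd_det_nonneg (PosSemidef.add (smul_posSemidef ?_ hγ0) ?_)
    · have h := (posSemidef_diagonal_iff.mpr fun i => (hx.2 i).1).mul_mul_conjTranspose_same C
      rwa [hC.1.eq] at h
    · exact posSemidef_diagonal_iff.mpr fun i => by have := (hx.2 i).2; linarith
  have hdb := det_bound C hC hx hγ
  have hlog : Real.log ((γ • (C * Matrix.diagonal x * C)
        + Matrix.diagonal fun i => 1 - x i).det) ≤ (C.rank : ℝ) * Real.log b := by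
    rcases eq_or_lt_of_le hdet0 with h0 | hpos
    · rw [← h0, Real.log_zero]
      exact mul_nonneg (Nat.cast_nonneg _) (Real.log_nonneg hb1)
    · calc Real.log _ ≤ Real.log (b ^ C.rank) := Real.log_le_log hpos hdb
        _ = (C.rank : ℝ) * Real.log b := Real.log_pow _ _
  linarith

lemma linx_le {n s : ℕ} (hsn : s ≤ n) (C : Matrix (Fin n) (Fin n) ℝ) (hC : C.PosSemidef)
    {γ : ℝ} (hγ : 1 ≤ γ) :
    linxScaled n s C γ ≤
      (1/2) * ((C.rank : ℝ) * Real.log ((1 + (C * C).trace) * γ) - s * Real.log γ) := by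
  refine csSup_le ((PP_nonempty hsn).image _) ?_
  rintro y ⟨x, hx, rfl⟩
  exact fLinx_le C hC hx hγ

theorem stmt_18 (n s : ℕ) (hs : 0 < s) (hsn : s < n)
    (C : Matrix (Fin n) (Fin n) ℝ) (hC : C.PosSemidef) (hrank : C.rank < s) :
    Filter.Tendsto (fun γ : ℝ => linxScaled n s C γ) Filter.atTop Filter.atBot ∧
    ∀ γ : ℝ, 0 < γ → ∃ γ' : ℝ, 0 < γ' ∧ linxScaled n s C γ' < linxScaled n s C γ := by
  have hsn' : s ≤ n := hsn.le
  set T := (C * C).trace with hTdef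
  set r := C.rank with hrdef
  have hrs : (r : ℝ) < s := by exact_mod_cast hrank
  have hT0 : 0 ≤ T := hTnn C hC
  have hψ : Tendsto (fun γ : ℝ => (1/2) * ((r:ℝ) * Real.log (1 + T))
      + (((r:ℝ) - s)/2) * Real.log γ) atTop atBot := by
    have h1 : Tendsto (fun γ : ℝ => (((r:ℝ) - s)/2) * Real.log γ) atTop atBot :=
      (tendsto_const_mul_atBot_of_neg (by linarith)).mpr Real.tendsto_log_atTop
    exact tendsto_atBot_add_const_left _ _ h1
  have hmain : Tendsto (fun γ : ℝ => linxScaled n s C γ) atTop atBot := by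
    refine tendsto_atBot_mono' atTop ?_ hψ
    filter_upwards [eventually_ge_atTop (1:ℝ)] with γ hγ
    have hγpos : (0:ℝ) < γ := by linarith
    have h := linx_le hsn' C hC hγ
    have heq : (1/2) * ((r : ℝ) * Real.log ((1 + T) * γ) - s * Real.log γ)
        = (1/2) * ((r:ℝ) * Real.log (1 + T)) + (((r:ℝ) - s)/2) * Real.log γ := by
      rw [Real.log_mul (by linarith : (0:ℝ) < 1 + T).ne' hγpos.ne']
      ring
    rw [heq] at h
    exact h
  refine ⟨hmain, fun γ hγ => ?_⟩
  obtain ⟨γ', hγ'⟩ := ((hmain.eventually (eventually_lt_atBot (linxScaled n s C γ))).and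
    (eventually_gt_atTop 0)).exists
  exact ⟨γ', hγ'.2, hγ'.1⟩

end
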